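/- Let 0 ∉ D, D ∪ {0} an additive subgroup of F_q of size n+1, and γ ∉ D ∪ {0}. Then the number of monic polynomials of degree k+1 over F_q with coefficient of x^k equal to γ and exactly r distinct roots in D equals q^{k−r} C(n,r) Σ_{j=0}^{k−r} (−q)^{−j} C(n−r, j). -/

import Mathlib

open Polynomial Finset

section Aux

variable {F : Type*} [Field F] [Fintype F]

lemma monic_iff_aux {m : ℕ} (hm : 1 ≤ m) (β : F) (h : F[X]) :
    (h.Monic ∧ h.natDegree = m ∧ h.nextCoeff = β) ↔
      h - (X ^ m + C β * X ^ (m - 1)) ∈ degreeLT F (m - 1) := by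
  constructor
  · rintro ⟨h1, h2, h3⟩
    rw [mem_degreeLT, degree_lt_iff_coeff_zero]
    intro i hi
    have h3' : h.coeff (m - 1) = β := by
      rw [← h3, nextCoeff_of_natDegree_pos (by omega), h2]
    simp only [coeff_sub, coeff_add, coeff_C_mul, coeff_X_pow]
    rcases lt_trichotomy i m with hlt | rfl | hgt
    · have : i = m - 1 := by omega
      subst this
      rw [if_neg (by omega), if_pos rfl, h3']; ring
    · rw [if_pos rfl, if_neg (by omega)]
      have : h.coeff i = 1 := by rw [← h2]; exact h1.coeff_natDegree
      rw [this]; ring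
    · rw [if_neg (by omega), if_neg (by omega),
        coeff_eq_zero_of_natDegree_lt (by omega)]; ring
  · intro hp
    rw [mem_degreeLT] at hp
    set p := h - (X ^ m + C β * X ^ (m - 1)) with hpdef
    have hh : h = X ^ m + (C β * X ^ (m - 1) + p) := by rw [hpdef]; ring
    have hdeg : degree (C β * X ^ (m - 1) + p) < (m : WithBot ℕ) := by
      apply lt_of_le_of_lt (degree_add_le _ _)
      apply max_lt
      · apply lt_of_le_of_lt (degree_C_mul_X_pow_le _ _)
        exact Nat.cast_lt.mpr (Nat.sub_lt (by omega) one_pos)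
      · exact lt_of_lt_of_le hp (Nat.cast_le.mpr (by omega))
    have hmon : h.Monic := by rw [hh]; exact monic_X_pow_add hdeg
    have hdeg2 : h.natDegree = m := by
      rw [hh]
      have := degree_add_eq_left_of_degree_lt (p := (X ^ m : F[X]))
        (q := C β * X ^ (m - 1)  + p) (by rwa [degree_X_pow])
      have h4 : degree (X ^ m + (C β * X ^ (m - 1) + p)) = (m : WithBot ℕ) := by
        rw [this, degree_X_pow]
      exact natDegree_eq_of_degree_eq_some h4
    refine ⟨hmon, hdeg2, ?_⟩
    rw [nextCoeff_of_natDegree_pos (by omega), hdeg2]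
    have hpc : p.coeff (m - 1) = 0 :=
      coeff_eq_zero_of_degree_lt (lt_of_lt_of_le hp (le_refl _))
    rw [hh]
    simp only [coeff_add, coeff_C_mul, coeff_X_pow, hpc]
    rw [if_neg (show ¬ m - 1 = m by omega)]
    simp

noncomputable def monicEquiv (m : ℕ) (hm : 1 ≤ m) (β : F) :
    {h : F[X] // h.Monic ∧ h.natDegree = m ∧ h.nextCoeff = β} ≃ degreeLT F (m - 1) where
  toFun h := ⟨h.1 - (X ^ m + C β * X ^ (m - 1)), (monic_iff_aux hm β h.1).1 h.2⟩
  invFun p := ⟨p.1 + (X ^ m + C β * X ^ (m - 1)), by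
    apply (monic_iff_aux hm β _).2; simpa using p.2⟩
  left_inv h := by ext : 1; simp
  right_inv p := by ext : 1; simp

lemma card_degreeLT (d : ℕ) : Nat.card (degreeLT F d) = Fintype.card F ^ d := by
  rw [Nat.card_congr (degreeLTEquiv F d).toEquiv, Nat.card_eq_fintype_card,
    Fintype.card_fun, Fintype.card_fin]

lemma card_monic_nextCoeff (m : ℕ) (hm : 1 ≤ m) (β : F) :
    Nat.card {h : F[X] // h.Monic ∧ h.natDegree = m ∧ h.nextCoeff = β} =
      Fintype.card F ^ (m - 1) := by
  rw [Nat.card_congr (monicEquiv m hm β), card_degreeLT]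

lemma peel_root (m : ℕ) (β t : F) (T : Finset F) (ht : t ∉ T) :
    Nat.card {h : F[X] // h.Monic ∧ h.natDegree = m + 1 ∧ h.nextCoeff = β ∧
        (h.eval t = 0 ∧ ∀ s ∈ T, h.eval s = 0)} =
    Nat.card {u : F[X] // u.Monic ∧ u.natDegree = m ∧ u.nextCoeff = β + t ∧
        (∀ s ∈ T, u.eval s = 0)} := by
  symm
  apply Nat.card_eq_of_bijective
    (f := fun u => ⟨(X - C t) * u.1, (monic_X_sub_C t).mul u.2.1, by
      rw [natDegree_mul (X_sub_C_ne_zero t) u.2.1.ne_zero, natDegree_X_sub_C, u.2.2.1]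
      omega, by
      rw [(monic_X_sub_C t).nextCoeff_mul u.2.1, nextCoeff_X_sub_C, u.2.2.2.1]; ring, by
      simp, fun s hs => by
      simp [u.2.2.2.2 s hs]⟩)
  constructor
  · rintro ⟨u, hu⟩ ⟨v, hv⟩ huv
    have := congrArg (Subtype.val) huv
    simp only at this
    exact Subtype.ext (mul_left_cancel₀ (X_sub_C_ne_zero t) this)
  · rintro ⟨h, h1, h2, h3, h4, h5⟩
    obtain ⟨u, hu⟩ := dvd_iff_isRoot.mpr h4
    have hune : u ≠ 0 := by
      rintro rfl; rw [mul_zero] at hu; exact h1.ne_zero hu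
    have hdeg : u.natDegree = m := by
      have := congrArg natDegree hu
      rw [natDegree_mul (X_sub_C_ne_zero t) hune, natDegree_X_sub_C, h2] at this
      omega
    have humon : u.Monic := (monic_X_sub_C t).of_mul_monic_left (hu ▸ h1)
    have hnext : u.nextCoeff = β + t := by
      have := congrArg nextCoeff hu
      rw [(monic_X_sub_C t).nextCoeff_mul humon, nextCoeff_X_sub_C, h3] at this
      rw [this]; ring
    refine ⟨⟨u, humon, hdeg, hnext, fun s hs => ?_⟩, ?_⟩
    · have := h5 s hs
      rw [hu] at this
      simp only [eval_mul, eval_sub, eval_X, eval_C] at this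
      rcases mul_eq_zero.mp this with h6 | h6
      · exfalso; rw [sub_eq_zero] at h6; exact ht (h6 ▸ hs)
      · exact h6
    · exact Subtype.ext hu.symm

lemma card_vanish (T : Finset F) : ∀ (m : ℕ) (β : F), T.card < m →
    Nat.card {h : F[X] // h.Monic ∧ h.natDegree = m ∧ h.nextCoeff = β ∧
      ∀ s ∈ T, h.eval s = 0} = Fintype.card F ^ (m - 1 - T.card) := by
  classical
  induction T using Finset.induction_on with
  | empty =>
    intro m β hm
    rw [Nat.card_congr (Equiv.subtypeEquivRight (q := fun h : F[X] =>
      h.Monic ∧ h.natDegree = m ∧ h.nextCoeff = β) (by simp))]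
    simp only [Finset.card_empty, Nat.sub_zero]
    exact card_monic_nextCoeff m (by omega) β
  | @insert a s ha ih =>
    intro m β hm
    rw [Finset.card_insert_of_notMem ha] at hm
    obtain ⟨m', rfl⟩ : ∃ m', m = m' + 1 := ⟨m - 1, by omega⟩
    rw [Nat.card_congr (Equiv.subtypeEquivRight (q := fun h : F[X] =>
      h.Monic ∧ h.natDegree = m' + 1 ∧ h.nextCoeff = β ∧
        (h.eval a = 0 ∧ ∀ x ∈ s, h.eval x = 0)) (by simp [Finset.forall_mem_insert]))]
    rw [peel_root m' β a s ha, ih m' (β + a) (by omega)]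
    rw [Finset.card_insert_of_notMem ha]
    congr 1
    omega

lemma card_vanish_zero (T : Finset F) : ∀ (m : ℕ) (β : F), m ≤ T.card →
    β ≠ -∑ t ∈ T, t →
    Nat.card {h : F[X] // h.Monic ∧ h.natDegree = m ∧ h.nextCoeff = β ∧
      ∀ s ∈ T, h.eval s = 0} = 0 := by
  classical
  induction T using Finset.induction_on with
  | empty =>
    intro m β hm hne
    rw [Nat.card_eq_zero]
    left
    constructor
    rintro ⟨h, h1, h2, h3, -⟩
    obtain rfl : m = 0 := by simpa using hm
    rw [h1.natDegree_eq_zero.mp h2, ← C_1, nextCoeff_C_eq_zero] at h3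
    exact hne (by simp [← h3])
  | @insert a s ha ih =>
    intro m β hm hne
    cases m with
    | zero =>
      rw [Nat.card_eq_zero]
      left
      constructor
      rintro ⟨h, h1, h2, h3, h4⟩
      have := h4 a (Finset.mem_insert_self a s)
      rw [h1.natDegree_eq_zero.mp h2] at this
      simp at this
    | succ m' =>
      rw [Nat.card_congr (Equiv.subtypeEquivRight (q := fun h : F[X] =>
        h.Monic ∧ h.natDegree = m' + 1 ∧ h.nextCoeff = β ∧
          (h.eval a = 0 ∧ ∀ x ∈ s, h.eval x = 0)) (by simp [Finset.forall_mem_insert]))]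
      rw [peel_root m' β a s ha]
      apply ih m' (β + a)
      · rw [Finset.card_insert_of_notMem ha] at hm; omega
      · rw [Finset.sum_insert ha] at hne
        intro hcon
        apply hne
        rw [neg_add, ← hcon]
        ring

lemma finite_monic_pred (m : ℕ) (P : F[X] → Prop) :
    Finite {h : F[X] // h.Monic ∧ h.natDegree = m ∧ P h} := by
  apply Finite.of_injective (f := fun h => degreeLTEquiv F (m + 1)
    ⟨h.1, mem_degreeLT.mpr (lt_of_le_of_lt (degree_le_natDegree.trans
      (by exact_mod_cast Nat.cast_le.mpr h.2.2.1.le)) (by exact_mod_cast Nat.cast_lt.mpr (Nat.lt_succ_self m)))⟩)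
  intro a b hab
  have := (degreeLTEquiv F (m + 1)).injective hab
  exact Subtype.ext (congrArg (fun x : degreeLT F (m+1) => (x : F[X])) this)

lemma card_nonvanish (m : ℕ) (β : F) (S : Finset F) :
    (Nat.card {h : F[X] // h.Monic ∧ h.natDegree = m ∧ h.nextCoeff = β ∧
      ∀ s ∈ S, h.eval s ≠ 0} : ℚ) =
    ∑ T ∈ S.powerset, (-1) ^ T.card *
      (Nat.card {h : F[X] // h.Monic ∧ h.natDegree = m ∧ h.nextCoeff = β ∧
        ∀ s ∈ T, h.eval s = 0} : ℚ) := by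
  classical
  haveI : Finite {h : F[X] // h.Monic ∧ h.natDegree = m ∧ h.nextCoeff = β} :=
    finite_monic_pred m _
  haveI : Fintype {h : F[X] // h.Monic ∧ h.natDegree = m ∧ h.nextCoeff = β} :=
    Fintype.ofFinite _
  have key : ∀ Q : F[X] → Prop, Nat.card {h : F[X] // h.Monic ∧ h.natDegree = m ∧
      h.nextCoeff = β ∧ Q h} = (Finset.univ.filter
        (fun a : {h : F[X] // h.Monic ∧ h.natDegree = m ∧ h.nextCoeff = β} => Q a.1)).card := by
    intro Q
    rw [← Fintype.card_subtype, ← Nat.card_eq_fintype_card]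
    exact Nat.card_congr ⟨fun h => ⟨⟨h.1, h.2.1, h.2.2.1, h.2.2.2.1⟩, h.2.2.2.2⟩,
      fun a => ⟨a.1.1, a.1.2.1, a.1.2.2.1, a.1.2.2.2, a.2⟩,
      fun _ => rfl, fun _ => rfl⟩
  rw [key (fun h => ∀ s ∈ S, h.eval s ≠ 0)]
  rw [Finset.card_filter]
  push_cast
  have step : ∀ a : {h : F[X] // h.Monic ∧ h.natDegree = m ∧ h.nextCoeff = β},
      (if ∀ s ∈ S, eval s a.1 ≠ 0 then (1:ℚ) else 0) =
      ∑ T ∈ S.powerset, (-1) ^ T.card *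
        (if ∀ s ∈ T, eval s a.1 = 0 then (1:ℚ) else 0) := by
    intro a
    have e1 : (if (∀ s ∈ S, eval s (a.1) ≠ 0) then (1:ℚ) else 0) =
        ∏ s ∈ S, (-(if eval s a.1 = 0 then (1:ℚ) else 0) + 1) := by
      by_cases h : ∀ s ∈ S, eval s a.1 ≠ 0
      · rw [if_pos h, Finset.prod_eq_one]
        intro s hs; simp [h s hs]
      · rw [if_neg h]
        push_neg at h
        obtain ⟨s, hs, hval⟩ := h
        refine (Finset.prod_eq_zero hs ?_).symm
        simp [hval]
    rw [e1, Finset.prod_add]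
    apply Finset.sum_congr rfl
    intro T hT
    rw [Finset.prod_const_one, mul_one]
    have h2 : ∀ s ∈ T, -(if eval s a.1 = 0 then (1:ℚ) else 0) =
        (-1) * (if eval s a.1 = 0 then (1:ℚ) else 0) := by intro s _; ring
    rw [Finset.prod_congr rfl h2, Finset.prod_mul_distrib, Finset.prod_const,
      Finset.prod_boole]
    by_cases hQ : ∀ s ∈ T, eval s (a.1) = 0 <;> simp [hQ]
  rw [Finset.sum_congr rfl (fun a _ => step a), Finset.sum_comm]
  apply Finset.sum_congr rfl
  intro T hT
  rw [← Finset.mul_sum, key (fun h => ∀ s ∈ T, h.eval s = 0)]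
  congr 1
  rw [Finset.sum_boole]
  norm_cast

lemma card_nonvanish_eval (m : ℕ) (hm : 1 ≤ m) (β : F) (S : Finset F)
    (hβ : ∀ T ∈ S.powerset, β ≠ -∑ t ∈ T, t) :
    (Nat.card {h : F[X] // h.Monic ∧ h.natDegree = m ∧ h.nextCoeff = β ∧
      ∀ s ∈ S, h.eval s ≠ 0} : ℚ) =
    ∑ j ∈ Finset.range (S.card + 1), (-1 : ℚ) ^ j * (S.card.choose j) *
      (if j ≤ m - 1 then ((Fintype.card F : ℚ)) ^ (m - 1 - j) else 0) := by
  classical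
  rw [card_nonvanish, Finset.sum_powerset]
  apply Finset.sum_congr rfl
  intro j hj
  have hterm : ∀ T ∈ S.powersetCard j, (-1 : ℚ) ^ T.card *
      (Nat.card {h : F[X] // h.Monic ∧ h.natDegree = m ∧ h.nextCoeff = β ∧
        ∀ s ∈ T, h.eval s = 0} : ℚ) =
      (-1 : ℚ) ^ j * (if j ≤ m - 1 then ((Fintype.card F : ℚ)) ^ (m - 1 - j) else 0) := by
    intro T hT
    obtain ⟨hTsub, hTcard⟩ := Finset.mem_powersetCard.mp hT
    rw [hTcard]
    congr 1
    by_cases hjm : j ≤ m - 1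
    · rw [if_pos hjm, card_vanish T m β (by omega), hTcard]
      push_cast
      ring
    · rw [if_neg hjm, card_vanish_zero T m β (by omega)]
      · simp
      · exact hβ T (Finset.mem_powerset.mpr hTsub)
  rw [Finset.sum_congr rfl hterm, Finset.sum_const, Finset.card_powersetCard]
  push_cast
  ring

lemma filter_root_prod [DecidableEq F] (D R : Finset F) (hsub : R ⊆ D) (h : F[X])
    (hh : ∀ s ∈ D \ R, h.eval s ≠ 0) :
    D.filter (fun s => ((∏ t ∈ R, (X - C t)) * h).eval s = 0) = R := by
  ext s
  simp only [Finset.mem_filter, eval_mul, eval_prod, eval_sub, eval_X, eval_C]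
  constructor
  · rintro ⟨hsD, hval⟩
    by_contra hsR
    rcases mul_eq_zero.mp hval with hc | hc
    · obtain ⟨t, htR, ht0⟩ := Finset.prod_eq_zero_iff.mp hc
      rw [sub_eq_zero] at ht0
      exact hsR (ht0 ▸ htR)
    · exact hh s (Finset.mem_sdiff.mpr ⟨hsD, hsR⟩) hc
  · intro hsR
    refine ⟨hsub hsR, ?_⟩
    rw [Finset.prod_eq_zero hsR (by ring), zero_mul]

lemma card_main_eq [DecidableEq F] (D : Finset F) (r m : ℕ) (γ : F) :
    Nat.card {f : F[X] // f.Monic ∧ f.natDegree = r + m ∧ f.nextCoeff = γ ∧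
        (D.filter (fun s => f.eval s = 0)).card = r} =
    Nat.card ((R : D.powersetCard r) × {h : F[X] // h.Monic ∧ h.natDegree = m ∧
        h.nextCoeff = γ + ∑ t ∈ (R : Finset F), t ∧
        ∀ s ∈ D \ (R : Finset F), h.eval s ≠ 0}) := by
  have hPm : ∀ R : Finset F, (∏ t ∈ R, (X - C t)).Monic :=
    fun R => monic_prod_of_monic _ _ fun t _ => monic_X_sub_C t
  have hPdeg : ∀ R : Finset F, (∏ t ∈ R, (X - C t)).natDegree = R.card := by
    intro R
    rw [natDegree_prod_of_monic _ _ fun t _ => monic_X_sub_C t]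
    simp
  have hPnext : ∀ R : Finset F, (∏ t ∈ R, (X - C t)).nextCoeff = -∑ t ∈ R, t := by
    intro R
    rw [Monic.nextCoeff_prod _ _ fun t _ => monic_X_sub_C t]
    simp only [nextCoeff_X_sub_C]
    exact Finset.sum_neg_distrib (f := fun t : F => t)
  symm
  apply Nat.card_eq_of_bijective (f := fun x =>
    ⟨(∏ t ∈ (x.1 : Finset F), (X - C t)) * x.2.1, by
      obtain ⟨⟨R, hR⟩, h, hmon, hdeg, hnext, hnv⟩ := x
      obtain ⟨hsub, hcard⟩ := Finset.mem_powersetCard.mp hR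
      refine ⟨(hPm R).mul hmon, ?_, ?_, ?_⟩
      · rw [natDegree_mul (hPm R).ne_zero hmon.ne_zero, hPdeg, hdeg, hcard]
      · rw [(hPm R).nextCoeff_mul hmon, hPnext, hnext]
        ring
      · rw [filter_root_prod D R hsub h hnv, hcard]⟩)
  constructor
  · rintro ⟨⟨R, hR⟩, h, hh⟩ ⟨⟨R', hR'⟩, h', hh'⟩ hEq
    have hval : (∏ t ∈ R, (X - C t)) * h = (∏ t ∈ R', (X - C t)) * h' :=
      congrArg Subtype.val hEq
    have hRR : R = R' := by
      rw [← filter_root_prod D R (Finset.mem_powersetCard.mp hR).1 h hh.2.2.2,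
        ← filter_root_prod D R' (Finset.mem_powersetCard.mp hR').1 h' hh'.2.2.2, hval]
    subst hRR
    have hhh : h = h' := mul_left_cancel₀ (hPm R).ne_zero hval
    subst hhh
    rfl
  · rintro ⟨f, h1, h2, h3, h4⟩
    set R : Finset F := D.filter (fun s => f.eval s = 0) with hRdef
    have hsub : R ⊆ D := Finset.filter_subset _ _
    have hdvd : (∏ t ∈ R, (X - C t)) ∣ f := by
      rw [Finset.prod_eq_multiset_prod,
        Multiset.prod_X_sub_C_dvd_iff_le_roots h1.ne_zero,
        Finset.val_le_iff_val_subset]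
      intro x hx
      rw [Finset.mem_val, hRdef, Finset.mem_filter] at hx
      rw [mem_roots h1.ne_zero]
      exact hx.2
    obtain ⟨u, hu⟩ := hdvd
    have humon : u.Monic := (hPm R).of_mul_monic_left (hu ▸ h1)
    have hune : u ≠ 0 := humon.ne_zero
    have hudeg : u.natDegree = m := by
      have := congrArg natDegree hu
      rw [natDegree_mul (hPm R).ne_zero hune, hPdeg, h4, h2] at this
      omega
    have hunext : u.nextCoeff = γ + ∑ t ∈ R, t := by
      have := congrArg nextCoeff hu
      rw [(hPm R).nextCoeff_mul humon, hPnext, h3] at this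
      linear_combination -this
    have hunv : ∀ s ∈ D \ R, u.eval s ≠ 0 := by
      intro s hs hval
      rw [Finset.mem_sdiff, hRdef, Finset.mem_filter] at hs
      exact hs.2 ⟨hs.1, by rw [hu]; simp [hval]⟩
    refine ⟨⟨⟨R, Finset.mem_powersetCard.mpr ⟨hsub, h4⟩⟩, u, humon, hudeg, hunext, hunv⟩, ?_⟩
    exact Subtype.ext hu.symm


end Aux


/-- Let `H = D ∪ {0}` be an additive subgroup of `F_q` of size `n+1` with `0 ∉ D`, and
`γ ∉ H`.  The number of monic polynomials of degree `k+1` over `F_q` with coefficient of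
`x^k` equal to `γ` and exactly `r` distinct roots in `D` equals
`q^{k-r} C(n,r) ∑_{j=0}^{k-r} (-q)^{-j} C(n-r, j)`. -/
theorem stmt16 {F : Type*} [Field F] [Fintype F] (H : AddSubgroup F) (n k r : ℕ)
    (hn : Nat.card H = n + 1) (hr : r ≤ k) (γ : F) (hγ : γ ∉ H) :
    (Nat.card {f : F[X] // f.Monic ∧ f.natDegree = k + 1 ∧ f.coeff k = γ ∧
        Nat.card {α : F // α ∈ H ∧ α ≠ 0 ∧ f.eval α = 0} = r} : ℚ) =
      (Fintype.card F : ℚ) ^ (k - r) * (n.choose r : ℚ) *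
        ∑ j ∈ Finset.range (k - r + 1),
          (-(Fintype.card F : ℚ)) ^ (-(j : ℤ)) * ((n - r).choose j : ℚ) := by
  classical
  have hq0 : (Fintype.card F : ℚ) ≠ 0 := Nat.cast_ne_zero.mpr Fintype.card_ne_zero
  set q : ℚ := (Fintype.card F : ℚ) with hqdef
  set D : Finset F := (Finset.univ.filter (· ∈ H)).erase 0 with hDdef
  have hHcard : (Finset.univ.filter (· ∈ H)).card = n + 1 := by
    rw [← hn, Nat.card_eq_fintype_card, Fintype.card_subtype]
  have h0mem : (0 : F) ∈ Finset.univ.filter (· ∈ H) := by simp [H.zero_mem]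
  have hDcard : D.card = n := by
    rw [hDdef, Finset.card_erase_of_mem h0mem, hHcard, Nat.add_sub_cancel]
  have hDH : ∀ s ∈ D, s ∈ H := by
    intro s hs
    rw [hDdef, Finset.mem_erase, Finset.mem_filter] at hs
    exact hs.2.2
  -- rewrite the set of polynomials
  have hiff : ∀ f : F[X], (f.Monic ∧ f.natDegree = k + 1 ∧ f.coeff k = γ ∧
      Nat.card {α : F // α ∈ H ∧ α ≠ 0 ∧ f.eval α = 0} = r) ↔
      (f.Monic ∧ f.natDegree = r + (k + 1 - r) ∧ f.nextCoeff = γ ∧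
        (D.filter (fun s => f.eval s = 0)).card = r) := by
    intro f
    have hdegiff : f.natDegree = k + 1 ↔ f.natDegree = r + (k + 1 - r) := by
      constructor <;> (intro h; omega)
    have hcards : Nat.card {α : F // α ∈ H ∧ α ≠ 0 ∧ f.eval α = 0} =
        (D.filter (fun s => f.eval s = 0)).card := by
      rw [Nat.card_eq_fintype_card, Fintype.card_subtype]
      congr 1
      ext α
      rw [hDdef]
      simp only [Finset.mem_filter, Finset.mem_erase, Finset.mem_univ, true_and]
      tauto
    constructor
    · rintro ⟨h1, h2, h3, h4⟩
      refine ⟨h1, hdegiff.mp h2, ?_, by rw [← hcards]; exact h4⟩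
      rw [nextCoeff_of_natDegree_pos (by omega), h2, Nat.add_sub_cancel, h3]
    · rintro ⟨h1, h2, h3, h4⟩
      have h2' : f.natDegree = k + 1 := hdegiff.mpr h2
      refine ⟨h1, h2', ?_, by rw [hcards]; exact h4⟩
      rw [nextCoeff_of_natDegree_pos (by omega), h2', Nat.add_sub_cancel] at h3
      exact h3
  rw [Nat.card_congr (Equiv.subtypeEquivRight hiff), card_main_eq D r (k + 1 - r) γ]
  -- sigma count
  haveI hfibfin : ∀ R : ↥(D.powersetCard r), Finite {h : F[X] // h.Monic ∧
      h.natDegree = k + 1 - r ∧ h.nextCoeff = γ + ∑ t ∈ (R : Finset F), t ∧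
      ∀ s ∈ D \ (R : Finset F), h.eval s ≠ 0} := fun R => finite_monic_pred _ _
  haveI : ∀ R : ↥(D.powersetCard r), Fintype {h : F[X] // h.Monic ∧
      h.natDegree = k + 1 - r ∧ h.nextCoeff = γ + ∑ t ∈ (R : Finset F), t ∧
      ∀ s ∈ D \ (R : Finset F), h.eval s ≠ 0} := fun R => Fintype.ofFinite _
  rw [Nat.card_eq_fintype_card, Fintype.card_sigma]
  push_cast
  -- each fiber has the same cardinality
  set W : ℚ := ∑ j ∈ Finset.range (n - r + 1), (-1 : ℚ) ^ j * ((n - r).choose j) *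
    (if j ≤ k - r then q ^ (k - r - j) else 0) with hWdef
  have hfib : ∀ R : ↥(D.powersetCard r),
      ((Fintype.card {h : F[X] // h.Monic ∧ h.natDegree = k + 1 - r ∧
        h.nextCoeff = γ + ∑ t ∈ (R : Finset F), t ∧
        ∀ s ∈ D \ (R : Finset F), h.eval s ≠ 0} : ℕ) : ℚ) = W := by
    intro R
    obtain ⟨hRsub, hRcard⟩ := Finset.mem_powersetCard.mp R.2
    rw [← Nat.card_eq_fintype_card,
      card_nonvanish_eval (k + 1 - r) (by omega) _ (D \ (R : Finset F)) ?_]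
    · have hScard : (D \ (R : Finset F)).card = n - r := by
        rw [Finset.card_sdiff_of_subset hRsub, hDcard, hRcard]
      rw [hScard, hWdef]
      have hm1 : k + 1 - r - 1 = k - r := by omega
      rw [hm1]
    · intro T hT hcon
      apply hγ
      have hTH : ∑ t ∈ T, t ∈ H := by
        apply AddSubgroup.sum_mem
        intro t ht
        exact hDH t (Finset.mem_sdiff.mp (Finset.mem_powerset.mp hT ht)).1
      have hRH : ∑ t ∈ (R : Finset F), t ∈ H := by
        apply AddSubgroup.sum_mem
        intro t ht
        exact hDH t (hRsub ht)
      have : γ = -(∑ t ∈ T, t) - ∑ t ∈ (R : Finset F), t := by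
        linear_combination hcon
      rw [this]
      exact H.sub_mem (H.neg_mem hTH) hRH
  rw [Finset.sum_congr rfl (fun R _ => hfib R), Finset.sum_const, Finset.card_univ,
    Fintype.card_coe, Finset.card_powersetCard, hDcard, nsmul_eq_mul]
  -- final arithmetic
  rw [mul_comm (q ^ (k - r)) ((n.choose r : ℚ)), mul_assoc]
  congr 1
  rw [Finset.mul_sum, hWdef]
  set M : ℕ := max (k - r) (n - r) with hMdef
  set g : ℕ → ℚ := fun j => (-1 : ℚ) ^ j * ((n - r).choose j) *
    (if j ≤ k - r then q ^ (k - r - j) else 0) with hgdef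
  have hterm : ∀ j ∈ Finset.range (k - r + 1),
      q ^ (k - r) * ((-q) ^ (-(j : ℤ)) * ((n - r).choose j : ℚ)) = g j := by
    intro j hj
    have hjk : j ≤ k - r := by
      rw [Finset.mem_range] at hj; omega
    have h1 : ((-q) : ℚ) ^ (-(j : ℤ)) = (-1 : ℚ) ^ j * (q ^ j)⁻¹ := by
      rw [zpow_neg, zpow_natCast, neg_pow, mul_inv, ← inv_pow, inv_neg, inv_one]
    have hqq : q ^ (k - r - j) * q ^ j = q ^ (k - r) := by
      rw [← pow_add]; congr 1; omega
    simp only [hgdef]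
    rw [if_pos hjk, h1, ← hqq]
    field_simp
  rw [Finset.sum_congr rfl hterm]
  have e1 : ∑ j ∈ Finset.range (k - r + 1), g j = ∑ j ∈ Finset.range (M + 1), g j := by
    apply Finset.sum_subset (Finset.range_subset_range.mpr (by omega))
    intro j _ hj
    rw [Finset.mem_range, not_lt] at hj
    simp only [hgdef]
    rw [if_neg (by omega)]
    ring
  have e2 : ∑ j ∈ Finset.range (n - r + 1), g j = ∑ j ∈ Finset.range (M + 1), g j := by
    apply Finset.sum_subset (Finset.range_subset_range.mpr (by omega))
    intro j _ hj
    rw [Finset.mem_range, not_lt] at hj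
    simp only [hgdef]
    rw [Nat.choose_eq_zero_of_lt (by omega)]
    push_cast
    ring
  rw [e1, e2]
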